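/- In the setting of the AdiaConvert construction, for every x ∈ 𝕏, s ∈ [0,1] and ε ∈ (0,1], the state |ψ_x^+(s,ε)⟩ is an eigenvector of H_x(s,ε) = Λ(s,ε) − Π_x with eigenvalue 0, i.e. H_x(s,ε)|ψ_x^+(s,ε)⟩ = 0. -/

import Mathlib

noncomputable section
open scoped ComplexConjugate

namespace AdiaConvert

/-- Index type of the Hilbert space `H = H_O ⊕ (ℂⁿ ⊗ ℂ^{Σ∪{0̄}} ⊗ H_W)`, where
`H_O = ℂ² ⊗ H'`, `H' = ℂ^V`, `H_W = ℂ^W`, and the blank symbol `0̄` is `Option.none`. -/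
abbrev Idx (Al V W : Type*) (n : ℕ) : Type _ := (Fin 2 × V) ⊕ (Fin n × Option Al × W)

/-- The Hilbert space of the AdiaConvert algorithm. -/
abbrev Hsp (Al V W : Type*) (n : ℕ) : Type _ := EuclideanSpace ℂ (Idx Al V W n)

/-- Build a vector of `Hsp` from its coordinates. -/
def mk {Al V W : Type*} {n : ℕ} (f : Idx Al V W n → ℂ) : Hsp Al V W n :=
  (WithLp.equiv 2 _).symm f

variable {Al V W X : Type*} {n : ℕ}

/-- `θ(s) = πs/2`. -/
def θ (s : ℝ) : ℝ := Real.pi * s / 2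

/-- `ξ(s) = 2 cos θ(s) sin θ(s)`. -/
def ξ (s : ℝ) : ℝ := 2 * Real.cos (θ s) * Real.sin (θ s)

/-- The coordinates of `|y⁺⟩ = (|0̄⟩ + |y⟩)/√2`. -/
def gP [DecidableEq Al] (y : Al) : Option Al → ℂ := fun a =>
  if a = none then (Real.sqrt 2 : ℂ)⁻¹ else if a = some y then (Real.sqrt 2 : ℂ)⁻¹ else 0

/-- The coordinates of `|y⁻⟩ = (|0̄⟩ - |y⟩)/√2`. -/
def gM [DecidableEq Al] (y : Al) : Option Al → ℂ := fun a =>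
  if a = none then (Real.sqrt 2 : ℂ)⁻¹ else if a = some y then -(Real.sqrt 2 : ℂ)⁻¹ else 0

/-- `|k_x⁺(s)⟩ = cos θ(s) |0,ρ_x⟩ + sin θ(s) |1,σ_x⟩` (embedded in `H`). -/
def kP (ρv σv : X → EuclideanSpace ℂ V) (s : ℝ) (x : X) : Hsp Al V W n :=
  mk fun q => match q with
  | .inl (b, i) => if b = 0 then (Real.cos (θ s) : ℂ) * ρv x i
                   else (Real.sin (θ s) : ℂ) * σv x i
  | .inr _ => 0

/-- `|k_x⁻(s)⟩ = -sin θ(s) |0,ρ_x⟩ + cos θ(s) |1,σ_x⟩` (embedded in `H`). -/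
def kM (ρv σv : X → EuclideanSpace ℂ V) (s : ℝ) (x : X) : Hsp Al V W n :=
  mk fun q => match q with
  | .inl (b, i) => if b = 0 then -(Real.sin (θ s) : ℂ) * ρv x i
                   else (Real.cos (θ s) : ℂ) * σv x i
  | .inr _ => 0

/-- `∑ᵢ |i⟩ ⊗ |x_i^±⟩ ⊗ |c_{x,i}⟩` (embedded in `H`), where the `ℂ^{Σ∪{0̄}}` part has
coordinates `g (x_i)`. -/
def qPart (g : Al → Option Al → ℂ) (inp : X → Fin n → Al)
    (c : X → Fin n → EuclideanSpace ℂ W) (x : X) : Hsp Al V W n :=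
  mk fun q => match q with
  | .inl _ => 0
  | .inr (i, a, w) => g (inp x i) a * c x i w

/-- The non-normalized state `|Ψ_x⁺(s,ε)⟩`. -/
def PsiP [DecidableEq Al] (ρv σv : X → EuclideanSpace ℂ V) (inp : X → Fin n → Al)
    (u : X → Fin n → EuclideanSpace ℂ W) (Wr s ε : ℝ) (x : X) : Hsp Al V W n :=
  kP ρv σv s x + ((ε / Real.sqrt Wr : ℝ) : ℂ) • qPart gP inp u x

/-- The non-normalized state `|Ψ_x⁻(s,ε)⟩`. -/
def PsiM [DecidableEq Al] (ρv σv : X → EuclideanSpace ℂ V) (inp : X → Fin n → Al)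
    (v : X → Fin n → EuclideanSpace ℂ W) (Wr s ε : ℝ) (x : X) : Hsp Al V W n :=
  kM ρv σv s x + ((ξ s * (Real.sqrt Wr / ε) : ℝ) : ℂ) • qPart gM inp v x

/-- The normalized state `|ψ_x⁺(s,ε)⟩`. -/
def psiP [Fintype Al] [Fintype V] [Fintype W] [DecidableEq Al] (ρv σv : X → EuclideanSpace ℂ V) (inp : X → Fin n → Al)
    (u : X → Fin n → EuclideanSpace ℂ W) (Wr s ε : ℝ) (x : X) : Hsp Al V W n :=
  ‖PsiP ρv σv inp u Wr s ε x‖⁻¹ • PsiP ρv σv inp u Wr s ε x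

/-- The rank-one operator `|a⟩⟨b| : v ↦ ⟨b|v⟩·a`. -/
def ketbra [Fintype Al] [Fintype V] [Fintype W]
    (a b : Hsp Al V W n) : Hsp Al V W n →L[ℂ] Hsp Al V W n :=
  (innerSL ℂ b).smulRight a

/-- The orthogonal projection `Λ(s,ε)` onto `span{|Ψ_x⁻(s,ε)⟩ : x ∈ 𝕏}`. -/
def Lam [Fintype Al] [Fintype V] [Fintype W] [DecidableEq Al]
    (ρv σv : X → EuclideanSpace ℂ V) (inp : X → Fin n → Al)
    (v : X → Fin n → EuclideanSpace ℂ W) (Wr s ε : ℝ) :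
    Hsp Al V W n →L[ℂ] Hsp Al V W n :=
  (Submodule.span ℂ (Set.range fun x : X => PsiM ρv σv inp v Wr s ε x)).subtypeL.comp
    (Submodule.orthogonalProjectionOnto
      (Submodule.span ℂ (Set.range fun x : X => PsiM ρv σv inp v Wr s ε x)))

/-- The matrix of the oracle Hamiltonian `Π_x = ∑ᵢ |i⟩⟨i| ⊗ |x_i⁻⟩⟨x_i⁻| ⊗ I_W`
(acting as `0` on `H_O`). -/
def PiMat [DecidableEq Al] [DecidableEq W] (inp : X → Fin n → Al) (x : X) :
    Matrix (Idx Al V W n) (Idx Al V W n) ℂ :=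
  fun q q' => match q, q' with
  | .inr (i, a, w), .inr (i', a', w') =>
      if i = i' ∧ w = w' then gM (inp x i) a * conj (gM (inp x i) a') else 0
  | _, _ => 0

/-- The oracle Hamiltonian `Π_x` as an operator on `H`. -/
def PiC [Fintype Al] [Fintype V] [Fintype W]
    [DecidableEq Al] [DecidableEq V] [DecidableEq W]
    (inp : X → Fin n → Al) (x : X) : Hsp Al V W n →L[ℂ] Hsp Al V W n :=
  Matrix.toEuclideanCLM (𝕜 := ℂ) (PiMat inp x)

/-- The total Hamiltonian `H_x(s,ε) = Λ(s,ε) − Π_x`. -/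
def Hx [Fintype Al] [Fintype V] [Fintype W]
    [DecidableEq Al] [DecidableEq V] [DecidableEq W]
    (ρv σv : X → EuclideanSpace ℂ V) (inp : X → Fin n → Al)
    (v : X → Fin n → EuclideanSpace ℂ W) (Wr s ε : ℝ) (x : X) :
    Hsp Al V W n →L[ℂ] Hsp Al V W n :=
  Lam ρv σv inp v Wr s ε - PiC inp x

/-- The projection `P_x(s,ε) = |ψ_x⁺(s,ε)⟩⟨ψ_x⁺(s,ε)|`. -/
def Pproj [Fintype Al] [Fintype V] [Fintype W] [DecidableEq Al]
    (ρv σv : X → EuclideanSpace ℂ V) (inp : X → Fin n → Al)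
    (u : X → Fin n → EuclideanSpace ℂ W) (Wr s ε : ℝ) (x : X) :
    Hsp Al V W n →L[ℂ] Hsp Al V W n :=
  ketbra (psiP ρv σv inp u Wr s ε x) (psiP ρv σv inp u Wr s ε x)

/-- The operator `X_x(s,ε) = (π/(2N_x(ε))) |Ψ_x⁻(s,ε)⟩⟨ψ_x⁺(s,ε)|`. -/
def Xx [Fintype Al] [Fintype V] [Fintype W] [DecidableEq Al]
    (ρv σv : X → EuclideanSpace ℂ V) (inp : X → Fin n → Al)
    (u v : X → Fin n → EuclideanSpace ℂ W) (Wr s ε : ℝ) (x : X) :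
    Hsp Al V W n →L[ℂ] Hsp Al V W n :=
  ((Real.pi / (2 * ‖PsiP ρv σv inp u Wr s ε x‖) : ℝ) : ℂ) •
    ketbra (PsiM ρv σv inp v Wr s ε x) (psiP ρv σv inp u Wr s ε x)

section
variable {Al V W X : Type*} [Fintype Al] [DecidableEq Al] [Fintype V] [Fintype W] {n : ℕ}

omit [Fintype Al] [DecidableEq Al] [Fintype V] [Fintype W] in
lemma mk_apply (f : Idx Al V W n → ℂ) (q : Idx Al V W n) : mk f q = f q := rfl

lemma sq2 : ((Real.sqrt 2:ℂ))⁻¹ * ((Real.sqrt 2:ℂ))⁻¹ = (2:ℂ)⁻¹ := by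
  rw [← mul_inv]; norm_cast; rw [Real.mul_self_sqrt (by norm_num)]; norm_num

lemma gsum (b c : Al) :
    ∑ a : Option Al, conj (gM b a) * gP c a = if c = b then 0 else (2:ℂ)⁻¹ := by
  rw [Fintype.sum_option]
  have h1 : conj (gM b none) * gP c none = (2:ℂ)⁻¹ := by
    simp [gM, gP, ← sq2]
  have h2 : ∀ a : Al, conj (gM b (some a)) * gP c (some a)
      = if a = b ∧ a = c then -(2:ℂ)⁻¹ else 0 := by
    intro a
    by_cases hb : a = b <;> by_cases hc : a = c <;> simp_all [gM, gP, ← sq2]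
  rw [h1, Finset.sum_congr rfl (fun a _ => h2 a)]
  by_cases h : c = b
  · subst h
    have : ∀ a : Al, (if a = c ∧ a = c then -(2:ℂ)⁻¹ else 0) = if a = c then -(2:ℂ)⁻¹ else 0 :=
      fun a => by by_cases h : a = c <;> simp [h]
    rw [Finset.sum_congr rfl (fun a _ => this a),
      Finset.sum_ite_eq' Finset.univ c fun _ => -(2:ℂ)⁻¹]
    simp
  · rw [Finset.sum_eq_zero, if_neg h, add_zero]
    intro a _
    rw [if_neg]
    rintro ⟨rfl, rfl⟩; exact h rfl

lemma innerMP (ρv σv : X → EuclideanSpace ℂ V) (inp : X → Fin n → Al)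
    (u v : X → Fin n → EuclideanSpace ℂ W) (Wr s ε : ℝ) (hW : 0 < Wr) (hε0 : 0 < ε)
    (hadv : ∀ x y : X,
      (inner ℂ (ρv x) (ρv y) : ℂ) - (inner ℂ (σv x) (σv y) : ℂ) =
        ∑ i ∈ Finset.univ.filter (fun i => inp x i ≠ inp y i),
          (inner ℂ (u x i) (v y i) : ℂ))
    (x y : X) :
    (inner ℂ (PsiM ρv σv inp v Wr s ε y) (PsiP (V := V) ρv σv inp u Wr s ε x) : ℂ) = 0 := by
  have hsW : Real.sqrt Wr ≠ 0 := by positivity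
  have hε : ε ≠ 0 := ne_of_gt hε0
  set A : ℂ := ∑ i : V, conj (ρv y i) * ρv x i with hA
  set B : ℂ := ∑ i : V, conj (σv y i) * σv x i with hB
  set D : Fin n → ℂ := fun i => ∑ w : W, conj (v y i w) * u x i w with hD
  have hcs : A - B = ∑ i ∈ Finset.univ.filter (fun i => inp x i ≠ inp y i), D i := by
    have := congrArg conj (hadv x y)
    simpa [PiLp.inner_apply, RCLike.inner_apply, hA, hB, hD, map_sum, mul_comm] using this
  rw [PsiM, PsiP]
  simp only [PiLp.inner_apply, RCLike.inner_apply', PiLp.add_apply, PiLp.smul_apply, smul_eq_mul,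
    kM, kP, qPart, mk_apply]
  rw [Fintype.sum_sum_type]
  simp only [Fintype.sum_prod_type, mul_zero, add_zero, zero_add, map_mul, map_neg,
    Complex.conj_ofReal, Fin.sum_univ_two, Fin.isValue, if_true, reduceIte,
    (show (1:Fin 2) ≠ 0 by decide)]
  have e1 : ∑ i : V, -(Real.sin (θ s) : ℂ) * conj (ρv y i) * ((Real.cos (θ s) : ℂ) * ρv x i)
      = -((Real.sin (θ s) : ℂ) * (Real.cos (θ s) : ℂ)) * A := by
    rw [hA, Finset.mul_sum]; exact Finset.sum_congr rfl fun i _ => by ring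
  have e2 : ∑ i : V, (Real.cos (θ s) : ℂ) * conj (σv y i) * ((Real.sin (θ s) : ℂ) * σv x i)
      = ((Real.cos (θ s) : ℂ) * (Real.sin (θ s) : ℂ)) * B := by
    rw [hB, Finset.mul_sum]; exact Finset.sum_congr rfl fun i _ => by ring
  have hc : ((ξ s * (Real.sqrt Wr / ε) : ℝ) : ℂ) * ((ε / Real.sqrt Wr : ℝ) : ℂ) = (ξ s : ℂ) := by
    have h1 : (Real.sqrt Wr : ℂ) ≠ 0 := by exact_mod_cast hsW
    have h2 : (ε : ℂ) ≠ 0 := by exact_mod_cast hε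
    push_cast
    field_simp
  have e3 : ∀ i : Fin n, (∑ a : Option Al, ∑ w : W,
      ((ξ s * (Real.sqrt Wr / ε) : ℝ) : ℂ) * (conj (gM (inp y i) a) * conj (v y i w)) *
        (((ε / Real.sqrt Wr : ℝ) : ℂ) * (gP (inp x i) a * u x i w)))
      = (ξ s : ℂ) * ((if inp x i = inp y i then 0 else (2:ℂ)⁻¹) * D i) := by
    intro i
    have : ∀ a : Option Al, ∀ w : W,
        ((ξ s * (Real.sqrt Wr / ε) : ℝ) : ℂ) * (conj (gM (inp y i) a) * conj (v y i w)) *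
          (((ε / Real.sqrt Wr : ℝ) : ℂ) * (gP (inp x i) a * u x i w))
        = (ξ s : ℂ) * ((conj (gM (inp y i) a) * gP (inp x i) a) * (conj (v y i w) * u x i w)) := by
      intro a w; rw [← hc]; ring
    rw [Finset.sum_congr rfl fun a _ => Finset.sum_congr rfl fun w _ => this a w]
    simp only [← Finset.mul_sum]
    congr 1
    rw [← Finset.sum_mul, gsum, hD]
  rw [e1, e2, Finset.sum_congr rfl fun i _ => e3 i]
  have e4 : ∑ i : Fin n, (ξ s : ℂ) * ((if inp x i = inp y i then 0 else (2:ℂ)⁻¹) * D i)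
      = (ξ s : ℂ) * ((2:ℂ)⁻¹ * (A - B)) := by
    rw [← Finset.mul_sum]
    congr 1
    rw [hcs, Finset.mul_sum, Finset.sum_filter]
    exact Finset.sum_congr rfl fun i _ => by by_cases h : inp x i = inp y i <;> simp [h]
  rw [e4]
  have hξ : (ξ s : ℂ) = 2 * (Real.cos (θ s) : ℂ) * (Real.sin (θ s) : ℂ) := by
    rw [ξ]; push_cast; ring
  rw [hξ]; ring
end

section
variable {Al V W X : Type*} [Fintype Al] [DecidableEq Al] [Fintype V] [DecidableEq V]
  [Fintype W] [DecidableEq W] {n : ℕ}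

lemma PiC_PsiP (ρv σv : X → EuclideanSpace ℂ V) (inp : X → Fin n → Al)
    (u : X → Fin n → EuclideanSpace ℂ W) (Wr s ε : ℝ) (x : X) :
    PiC inp x (PsiP ρv σv inp u Wr s ε x) = 0 := by
  apply (WithLp.equiv 2 ((Idx Al V W n) → ℂ)).injective
  rw [PiC]
  show Matrix.mulVec (PiMat inp x) ((WithLp.equiv 2 ((Idx Al V W n) → ℂ)) (PsiP ρv σv inp u Wr s ε x)) = _
  funext q
  obtain (p | ⟨i, a, w⟩) := q
  · simp only [Matrix.mulVec, dotProduct]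
    rw [Finset.sum_eq_zero]
    · rfl
    · rintro (p' | p') _ <;> simp [PiMat]
  · simp only [Matrix.mulVec, dotProduct]
    rw [Fintype.sum_sum_type]
    have hrhs : (WithLp.equiv 2 ((Idx Al V W n) → ℂ)) (0 : Hsp Al V W n) (Sum.inr (i,a,w)) = 0 :=
      rfl
    rw [hrhs, Finset.sum_eq_zero (fun p _ => by simp [PiMat]), zero_add]
    have hval : ∀ (i' : Fin n) (a' : Option Al) (w' : W),
        (WithLp.equiv 2 ((Idx Al V W n) → ℂ)) (PsiP ρv σv inp u Wr s ε x) (Sum.inr (i',a',w'))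
        = ((ε / Real.sqrt Wr : ℝ) : ℂ) * (gP (inp x i') a' * u x i' w') := by
      intro i' a' w'
      show PsiP ρv σv inp u Wr s ε x (Sum.inr (i',a',w')) = _
      simp [PsiP, kP, qPart, mk]
    simp only [Fintype.sum_prod_type]
    have key : ∀ i' : Fin n, (∑ a' : Option Al, ∑ w' : W,
        PiMat (V := V) inp x (Sum.inr (i,a,w)) (Sum.inr (i',a',w')) *
          (WithLp.equiv 2 ((Idx Al V W n) → ℂ)) (PsiP ρv σv inp u Wr s ε x) (Sum.inr (i',a',w')))
        = 0 := by
      intro i'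
      by_cases hi : i = i'
      · subst hi
        have h1 : ∀ (a' : Option Al) (w' : W),
            PiMat (V := V) inp x (Sum.inr (i,a,w)) (Sum.inr (i,a',w')) *
              (WithLp.equiv 2 ((Idx Al V W n) → ℂ)) (PsiP ρv σv inp u Wr s ε x) (Sum.inr (i,a',w'))
            = if w = w' then (gM (inp x i) a * (((ε / Real.sqrt Wr : ℝ) : ℂ) * u x i w')) *
                (conj (gM (inp x i) a') * gP (inp x i) a') else 0 := by
          intro a' w'
          rw [hval]
          simp only [PiMat, true_and]
          split_ifs <;> ring
        rw [Finset.sum_congr rfl fun a' _ => Finset.sum_congr rfl fun w' _ => h1 a' w']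
        rw [Finset.sum_congr rfl fun a' _ => Finset.sum_ite_eq Finset.univ w _]
        simp only [Finset.mem_univ, if_true]
        simp only [← Finset.mul_sum]
        rw [gsum (inp x i) (inp x i), if_pos rfl, mul_zero]
      · apply Finset.sum_eq_zero; intro a' _
        apply Finset.sum_eq_zero; intro w' _
        simp [PiMat, hi]
    rw [Finset.sum_congr rfl fun i' _ => key i', Finset.sum_const_zero]
end


end AdiaConvert

open AdiaConvert

/-- `|ψ_x⁺(s,ε)⟩` is an eigenvector of `H_x(s,ε) = Λ(s,ε) − Π_x` with
eigenvalue `0`. -/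
theorem stmt14
    {Al V W : Type*} [Fintype Al] [DecidableEq Al] [Fintype V] [DecidableEq V]
    [Fintype W] [DecidableEq W]
    {n : ℕ} {X : Type*} [Fintype X] (inp : X → Fin n → Al)
    (ρv σv : X → EuclideanSpace ℂ V)
    (hρ : ∀ x, ‖ρv x‖ = 1) (hσ : ∀ x, ‖σv x‖ = 1)
    (Wr : ℝ) (hW : 0 < Wr)
    (u v : X → Fin n → EuclideanSpace ℂ W)
    (hu : ∀ x, ∑ i, ‖u x i‖ ^ 2 ≤ Wr) (hv : ∀ x, ∑ i, ‖v x i‖ ^ 2 ≤ Wr)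
    (hadv : ∀ x y : X,
      (inner ℂ (ρv x) (ρv y) : ℂ) - (inner ℂ (σv x) (σv y) : ℂ) =
        ∑ i ∈ Finset.univ.filter (fun i => inp x i ≠ inp y i),
          (inner ℂ (u x i) (v y i) : ℂ))
    (ε : ℝ) (hε0 : 0 < ε) (hε1 : ε ≤ 1) :
    ∀ x : X, ∀ s ∈ Set.Icc (0:ℝ) 1,
      Hx ρv σv inp v Wr s ε x (psiP ρv σv inp u Wr s ε x) = 0 := by
  intro x s _
  have hinner : ∀ y : X,
      (inner ℂ (PsiM ρv σv inp v Wr s ε y) (psiP ρv σv inp u Wr s ε x) : ℂ) = 0 := by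
    intro y
    rw [psiP, RCLike.real_smul_eq_coe_smul (K := ℂ), inner_smul_right,
      innerMP ρv σv inp u v Wr s ε hW hε0 hadv x y, mul_zero]
  have hmem : psiP ρv σv inp u Wr s ε x ∈
      (Submodule.span ℂ (Set.range fun y : X => PsiM ρv σv inp v Wr s ε y))ᗮ := by
    rw [Submodule.mem_orthogonal]
    intro w hw
    induction hw using Submodule.span_induction with
    | mem w hw => obtain ⟨y, rfl⟩ := hw; exact hinner y
    | zero => exact inner_zero_left _
    | add a b _ _ ha hb => rw [inner_add_left, ha, hb, add_zero]
    | smul c a _ ha => rw [inner_smul_left, ha, mul_zero]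
  have hlam : Lam ρv σv inp v Wr s ε (psiP ρv σv inp u Wr s ε x) = 0 := by
    rw [Lam, ContinuousLinearMap.comp_apply,
      Submodule.orthogonalProjectionOnto_apply_of_mem_orthogonal hmem]
    rfl
  have hpic : PiC inp x (psiP ρv σv inp u Wr s ε x) = 0 := by
    rw [psiP, RCLike.real_smul_eq_coe_smul (K := ℂ), map_smul, PiC_PsiP, smul_zero]
  rw [Hx, ContinuousLinearMap.sub_apply, hlam, hpic, sub_zero]
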